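/- Let S be a free group on generators x₁,…,x_d, let 0 ≠ λ be an integer divisible by p, let S₁ be the subgroup generated by x₂,…,x_d, and let r = x₁^λ·s with s ∈ S₁. Let θ : S → ℤₚˣ be any homomorphism with torsion-free image in 1 + pℤₚ. Then there is no 1-cocycle c : S → ℤₚ (with respect to θ) satisfying c(x₁) = 1, c(x_i) = 0 for 2 ≤ i ≤ d, and c(r) = 0. -/

import Mathlib

theorem stmt16 (p : ℕ) [Fact p.Prime] (n : ℕ)
    (lam : ℤ) (hlam : lam ≠ 0) (hlam' : (p : ℤ) ∣ lam)
    (s : FreeGroup (Fin (n + 1)))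
    (hs : s ∈ Subgroup.closure
      {x : FreeGroup (Fin (n + 1)) | ∃ i : Fin (n + 1), i ≠ 0 ∧ x = FreeGroup.of i})
    (θ : FreeGroup (Fin (n + 1)) →* ℤ_[p]ˣ)
    (hθim : ∀ g : FreeGroup (Fin (n + 1)), ∃ y : ℤ_[p], (θ g : ℤ_[p]) = 1 + (p : ℤ_[p]) * y)
    (hθtf : ∀ (g : FreeGroup (Fin (n + 1))) (k : ℕ), 0 < k → (θ g) ^ k = 1 → θ g = 1) :
    ¬∃ c : FreeGroup (Fin (n + 1)) → ℤ_[p],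
      (∀ g h : FreeGroup (Fin (n + 1)), c (g * h) = c g + (θ g : ℤ_[p]) * c h) ∧
      c (FreeGroup.of (0 : Fin (n + 1))) = 1 ∧
      (∀ i : Fin (n + 1), i ≠ 0 → c (FreeGroup.of i) = 0) ∧
      c ((FreeGroup.of (0 : Fin (n + 1))) ^ lam * s) = 0 := by
  rintro ⟨c, hcoc, hc0, hci, hr⟩
  -- c 1 = 0
  have hone : c 1 = 0 := by
    have h := hcoc 1 1
    simp at h
    exact h
  -- kernel is a subgroup
  have hinv : ∀ g, c g = 0 → c g⁻¹ = 0 := by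
    intro g hg
    have h1 := hcoc g⁻¹ g
    rw [inv_mul_cancel g, hone, hg, mul_zero, add_zero] at h1
    exact h1.symm
  let K : Subgroup (FreeGroup (Fin (n + 1))) :=
    { carrier := {g | c g = 0}
      one_mem' := hone
      mul_mem' := by
        intro a b ha hb
        simp only [Set.mem_setOf_eq] at *
        rw [hcoc a b, ha, hb, mul_zero, add_zero]
      inv_mem' := by
        intro a ha
        exact hinv a ha }
  have hcs : c s = 0 := by
    have : s ∈ K := by
      refine Subgroup.closure_le K |>.2 ?_ hs
      rintro x ⟨i, hi, rfl⟩
      exact hci i hi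
    exact this
  -- so c (x₀^lam) = 0
  have hcr : c ((FreeGroup.of (0 : Fin (n + 1))) ^ lam) = 0 := by
    have := hcoc ((FreeGroup.of (0 : Fin (n + 1))) ^ lam) s
    rw [hcs, mul_zero, add_zero] at this
    rw [← this, hr]
  set g := FreeGroup.of (0 : Fin (n + 1)) with hg
  set U : ℤ_[p]ˣ := θ g with hU
  -- key formula
  have step : ∀ k : ℤ, c (g ^ (k + 1)) = c (g ^ k) + ((U ^ k : ℤ_[p]ˣ) : ℤ_[p]) := by
    intro k
    have := hcoc (g ^ k) g
    rw [← zpow_add_one, hc0, mul_one, map_zpow] at this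
    exact this
  by_cases hU1 : U = 1
  · -- c (g^k) = k
    have key : ∀ k : ℤ, c (g ^ k) = (k : ℤ_[p]) := by
      intro k
      induction k using Int.induction_on with
      | zero => simpa using hone
      | succ k ih => rw [step, ih, hU1]; push_cast [one_zpow]; ring
      | pred k ih =>
        have hst := step (-(k : ℤ) - 1)
        rw [sub_add_cancel, ih, hU1, one_zpow, Units.val_one] at hst
        have h2 : c (g ^ (-(k : ℤ) - 1)) = ((-(k : ℤ) : ℤ) : ℤ_[p]) - 1 := by
          linear_combination -hst
        rw [h2]; push_cast; ring
    rw [key] at hcr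
    exact hlam (by exact_mod_cast hcr)
  · have key : ∀ k : ℤ, ((U : ℤ_[p]) - 1) * c (g ^ k) = ((U ^ k : ℤ_[p]ˣ) : ℤ_[p]) - 1 := by
      intro k
      induction k using Int.induction_on with
      | zero => simp [hone]
      | succ k ih =>
        rw [step, mul_add, ih, zpow_add_one]
        push_cast
        ring
      | pred k ih =>
        have hst := step (-(k : ℤ) - 1)
        simp only [sub_add_cancel] at hst
        have : ((U : ℤ_[p]) - 1) * c (g ^ (-(k : ℤ) - 1)) =
            ((U ^ (-(k : ℤ) - 1) : ℤ_[p]ˣ) : ℤ_[p]) - 1 := by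
          have h2 : ((U : ℤ_[p]) - 1) * c (g ^ (-(k : ℤ))) =
              ((U : ℤ_[p]) - 1) * c (g ^ (-(k : ℤ) - 1)) +
              ((U : ℤ_[p]) - 1) * ((U ^ (-(k : ℤ) - 1) : ℤ_[p]ˣ) : ℤ_[p]) := by
            rw [hst]; ring
          rw [ih] at h2
          have hpow : ((U ^ (-(k : ℤ)) : ℤ_[p]ˣ) : ℤ_[p]) =
              (U : ℤ_[p]) * ((U ^ (-(k : ℤ) - 1) : ℤ_[p]ˣ) : ℤ_[p]) := by
            rw [show (-(k : ℤ)) = 1 + (-(k : ℤ) - 1) by ring, zpow_add, zpow_one]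
            push_cast
            ring
          rw [hpow] at h2
          linear_combination -h2
        exact this
    have hUlam : (U : ℤ_[p]ˣ) ^ lam ≠ 1 := by
      intro h
      apply hU1
      apply hθtf g lam.natAbs (by positivity)
      rcases Int.natAbs_eq lam with he | he
      · rw [← zpow_natCast, ← he, h]
      · rw [← zpow_natCast, ← neg_neg ((lam.natAbs : ℤ)), ← he, zpow_neg, h, inv_one]
    have := key lam
    rw [hcr, mul_zero] at this
    apply hUlam
    have : ((U ^ lam : ℤ_[p]ˣ) : ℤ_[p]) = 1 := by linear_combination -this
    exact Units.ext this
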